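/- Let f : ℕ → V be a function into a finite-dimensional complex vector space and suppose the family R(λ) = ∑_{μ=1}^∞ μ·f(λμ) converges absolutely for every λ ≥ 1 (in the sense that ∑_{μ} μ‖f(λμ)‖ < ∞ and moreover ∑_{λ,μ} λμ‖f(λμ)‖ < ∞). Then Möbius inversion holds: f(1) = ∑_{λ=1}^∞ λ·μ(λ)·R(λ), where μ is the Möbius function. -/

import Mathlib

open scoped ArithmeticFunction

/-- Möbius inversion for absolutely convergent series: if `f : ℕ → V` takes values in a
finite-dimensional normed complex vector space, `R(λ) = ∑_{μ≥1} μ·f(λμ)` converges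
absolutely for each `λ ≥ 1`, and the double sum `∑_{λ,μ≥1} λμ‖f(λμ)‖` is finite, then
`f(1) = ∑_{λ≥1} λ·μ(λ)·R(λ)` where `μ` is the Möbius function. (Terms with index `0`
carry coefficient `0`, so summing over `ℕ` agrees with summing over positive indices.) -/
theorem stmt15 {V : Type*} [NormedAddCommGroup V] [NormedSpace ℂ V]
    [FiniteDimensional ℂ V] (f : ℕ → V)
    (h1 : ∀ l : ℕ, 1 ≤ l → Summable (fun m : ℕ => (m : ℝ) * ‖f (l * m)‖))
    (h2 : Summable (fun p : ℕ × ℕ => (p.1 : ℝ) * (p.2 : ℝ) * ‖f (p.1 * p.2)‖)) :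
    f 1 = ∑' l : ℕ, ((l : ℂ) * ((ArithmeticFunction.moebius l : ℤ) : ℂ)) •
      (∑' m : ℕ, (m : ℂ) • f (l * m)) := by
  classical
  set F : ℕ × ℕ → V := fun p =>
    (((p.1 : ℂ) * ((ArithmeticFunction.moebius p.1 : ℤ) : ℂ)) * (p.2 : ℂ)) • f (p.1 * p.2)
    with hFdef
  -- Summability of F
  have hFsum : Summable F := by
    apply Summable.of_norm_bounded h2
    intro p
    rw [hFdef]
    simp only [norm_smul, norm_mul, Complex.norm_natCast]
    have hμ : ‖((ArithmeticFunction.moebius p.1 : ℤ) : ℂ)‖ ≤ 1 := by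
      rw [Complex.norm_intCast]
      exact_mod_cast (by exact_mod_cast ArithmeticFunction.abs_moebius_le_one :
        |((ArithmeticFunction.moebius p.1 : ℤ) : ℝ)| ≤ 1)
    calc (p.1 : ℝ) * ‖((ArithmeticFunction.moebius p.1 : ℤ) : ℂ)‖ * (p.2 : ℝ)
          * ‖f (p.1 * p.2)‖
        ≤ (p.1 : ℝ) * 1 * (p.2 : ℝ) * ‖f (p.1 * p.2)‖ := by
          gcongr
      _ = (p.1 : ℝ) * (p.2 : ℝ) * ‖f (p.1 * p.2)‖ := by ring
  -- Step 1: ∑' p, F p equals the right-hand side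
  have step1 : ∑' p, F p = ∑' l : ℕ,
      ((l : ℂ) * ((ArithmeticFunction.moebius l : ℤ) : ℂ)) •
        (∑' m : ℕ, (m : ℂ) • f (l * m)) := by
    rw [Summable.tsum_prod hFsum]
    refine tsum_congr fun l => ?_
    rcases Nat.eq_zero_or_pos l with rfl | hl
    · simp [hFdef]
    · have hsm : Summable fun m : ℕ => (m : ℂ) • f (l * m) := by
        apply Summable.of_norm
        convert h1 l hl using 2 with m
        rw [norm_smul, Complex.norm_natCast]
      calc ∑' m : ℕ, F (l, m)
          = ∑' m : ℕ, ((l : ℂ) * ((ArithmeticFunction.moebius l : ℤ) : ℂ)) •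
              ((m : ℂ) • f (l * m)) := by
            refine tsum_congr fun m => ?_
            rw [hFdef, smul_smul]
        _ = ((l : ℂ) * ((ArithmeticFunction.moebius l : ℤ) : ℂ)) •
              (∑' m : ℕ, (m : ℂ) • f (l * m)) :=
            Summable.tsum_const_smul _ hsm
  -- Step 2: ∑' p, F p = f 1, by grouping according to n = p.1 * p.2
  have step2 : ∑' p, F p = f 1 := by
    have hfib := (hFsum.hasSum.tsum_fiberwise (fun p : ℕ × ℕ => p.1 * p.2)).tsum_eq
    rw [← hfib]
    have hfibval : ∀ n : ℕ,
        (∑' b : (fun p : ℕ × ℕ => p.1 * p.2) ⁻¹' {n}, F b)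
          = ((n : ℂ) * (((1 : ArithmeticFunction ℤ) n : ℤ) : ℂ)) • f n := by
      intro n
      rcases Nat.eq_zero_or_pos n with rfl | hn
      · have : ∀ b : (fun p : ℕ × ℕ => p.1 * p.2) ⁻¹' {0}, F b = 0 := by
          rintro ⟨⟨a, b⟩, hb⟩
          simp only [Set.mem_preimage, Set.mem_singleton_iff] at hb
          rcases Nat.mul_eq_zero.mp hb with rfl | rfl <;> simp [hFdef]
        rw [tsum_congr this]
        simp
      · have hset : (fun p : ℕ × ℕ => p.1 * p.2) ⁻¹' {n}
            = (Nat.divisorsAntidiagonal n : Set (ℕ × ℕ)) := by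
          ext p
          simp [Nat.mem_divisorsAntidiagonal, hn.ne']
        rw [hset, Finset.tsum_subtype']
        have : ∀ p ∈ Nat.divisorsAntidiagonal n,
            F p = ((p.1 : ℂ) * ((ArithmeticFunction.moebius p.1 : ℤ) : ℂ) * (p.2 : ℂ)) • f n := by
          intro p hp
          simp only [hFdef]
          rw [(Nat.mem_divisorsAntidiagonal.mp hp).1]
        rw [Finset.sum_congr rfl this, ← Finset.sum_smul]
        congr 1
        have key : ∑ p ∈ Nat.divisorsAntidiagonal n,
            (p.1 : ℂ) * ((ArithmeticFunction.moebius p.1 : ℤ) : ℂ) * (p.2 : ℂ)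
            = (n : ℂ) * ∑ p ∈ Nat.divisorsAntidiagonal n,
                ((ArithmeticFunction.moebius p.1 : ℤ) : ℂ) := by
          rw [Finset.mul_sum]
          refine Finset.sum_congr rfl fun p hp => ?_
          have := (Nat.mem_divisorsAntidiagonal.mp hp).1
          rw [← this]
          push_cast
          ring
        rw [key]
        congr 1
        have := congrArg (fun g : ArithmeticFunction ℤ => g n)
          ArithmeticFunction.moebius_mul_coe_zeta
        simp only [ArithmeticFunction.mul_apply] at this
        rw [← this]
        rw [Int.cast_sum]
        refine Finset.sum_congr rfl fun p hp => ?_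
        have hp2 : p.2 ≠ 0 := (Nat.ne_zero_of_mem_divisorsAntidiagonal hp).2
        simp [ArithmeticFunction.zeta_apply, hp2]
    rw [tsum_congr hfibval]
    rw [tsum_eq_single 1]
    · simp
    · intro n hn
      rcases Nat.eq_zero_or_pos n with rfl | hn0
      · simp
      · have : (1 : ArithmeticFunction ℤ) n = 0 := by
          rw [ArithmeticFunction.one_apply]
          simp [hn]
        rw [this]
        simp
  rw [← step1, step2]
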